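/- arXiv:2604.07661 — 5 statements merged into one kernel-verified Lean document; each statement's English description precedes it below -/
import Mathlib

section
/- For every t ∈ ℝ one has t·f_{λ,k}(t) − θ·F_{λ,k}(t) ≥ 0, and moreover F_{λ,k}(t) ≥ F(t) for every t ∈ ℝ. -/
open MeasureTheory Filter Topology

noncomputable section

/-- For the truncated nonlinearity `f_{λ,k}` one has
`t f_{λ,k}(t) − θ F_{λ,k}(t) ≥ 0` and `F_{λ,k}(t) ≥ F(t)` for all `t`. -/
theorem statement_3 (f : ℝ → ℝ) (hf_cont : Continuous f)
    (hf_nonneg : ∀ t : ℝ, 0 < t → 0 ≤ f t)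
    (hf_zero : ∀ t : ℝ, t ≤ 0 → f t = 0)
    (θ p q : ℝ) (hθ2 : 2 < θ) (hθp : θ < p) (hpq : p < q)
    (hf2 : ∀ t : ℝ, θ * (∫ τ in (0 : ℝ)..t, f τ) ≤ t * f t)
    (lam : ℝ) (hlam : 0 < lam) (k : ℕ) (hk : 0 < k)
    (flk : ℝ → ℝ)
    (hflk_neg : ∀ t : ℝ, t < 0 → flk t = 0)
    (hflk_mid : ∀ t : ℝ, 0 ≤ t → t ≤ (k : ℝ) → flk t = f t + lam * t ^ (q - 1))
    (hflk_top : ∀ t : ℝ, (k : ℝ) ≤ t →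
      flk t = f t + lam * (k : ℝ) ^ (q - p) * t ^ (p - 1)) :
    ∀ t : ℝ,
      0 ≤ t * flk t - θ * (∫ τ in (0 : ℝ)..t, flk τ) ∧
      (∫ τ in (0 : ℝ)..t, f τ) ≤ ∫ τ in (0 : ℝ)..t, flk τ := by
  have hq0 : (0:ℝ) < q := by linarith
  have hp0 : (0:ℝ) < p := by linarith
  have hθ0 : (0:ℝ) < θ := by linarith
  have hkpos : (0:ℝ) < (k:ℝ) := by exact_mod_cast hk
  have hrq : Continuous (fun τ : ℝ => τ ^ (q-1)) :=
    continuous_iff_continuousAt.mpr fun x =>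
      Real.continuousAt_rpow_const x _ (Or.inr (by linarith))
  have hrp : Continuous (fun τ : ℝ => τ ^ (p-1)) :=
    continuous_iff_continuousAt.mpr fun x =>
      Real.continuousAt_rpow_const x _ (Or.inr (by linarith))
  have hcq : Continuous (fun τ : ℝ => f τ + lam * τ ^ (q-1)) :=
    hf_cont.add (continuous_const.mul hrq)
  have hcp : Continuous (fun τ : ℝ => f τ + lam * (k:ℝ) ^ (q-p) * τ ^ (p-1)) :=
    hf_cont.add (continuous_const.mul hrp)
  -- integral formula on [0, t] for 0 ≤ t ≤ k
  have hmid : ∀ t : ℝ, 0 ≤ t → t ≤ (k:ℝ) →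
      (∫ τ in (0:ℝ)..t, flk τ) = (∫ τ in (0:ℝ)..t, f τ) + lam * t ^ q / q := by
    intro t ht0 htk
    have heq : Set.EqOn flk (fun τ : ℝ => f τ + lam * τ ^ (q-1)) (Set.uIcc 0 t) := by
      intro τ hτ
      rw [Set.uIcc_of_le ht0] at hτ
      exact hflk_mid τ hτ.1 (hτ.2.trans htk)
    rw [intervalIntegral.integral_congr heq,
      intervalIntegral.integral_add (hf_cont.intervalIntegrable 0 t)
        ((show Continuous (fun τ : ℝ => lam * τ ^ (q-1)) from continuous_const.mul hrq).intervalIntegrable 0 t)]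
    congr 1
    rw [intervalIntegral.integral_const_mul,
      integral_rpow (Or.inl (by linarith : (-1:ℝ) < q - 1))]
    have h1 : q - 1 + 1 = q := by ring
    rw [h1, Real.zero_rpow (by linarith : q ≠ 0)]
    ring
  -- integral formula on [k, t] for t ≥ k
  have htopseg : ∀ t : ℝ, (k:ℝ) ≤ t →
      (∫ τ in (k:ℝ)..t, flk τ) = (∫ τ in (k:ℝ)..t, f τ)
        + lam * (k:ℝ) ^ (q-p) * ((t ^ p - (k:ℝ) ^ p) / p) := by
    intro t hkt
    have heq : Set.EqOn flk (fun τ : ℝ => f τ + lam * (k:ℝ) ^ (q-p) * τ ^ (p-1))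
        (Set.uIcc (k:ℝ) t) := by
      intro τ hτ
      rw [Set.uIcc_of_le hkt] at hτ
      exact hflk_top τ hτ.1
    rw [intervalIntegral.integral_congr heq,
      intervalIntegral.integral_add (hf_cont.intervalIntegrable _ t)
        ((show Continuous (fun τ : ℝ => lam * (k:ℝ) ^ (q-p) * τ ^ (p-1)) from continuous_const.mul hrp).intervalIntegrable _ t)]
    congr 1
    rw [intervalIntegral.integral_const_mul,
      integral_rpow (Or.inl (by linarith : (-1:ℝ) < p - 1))]
    have h1 : p - 1 + 1 = p := by ring
    rw [h1]
  -- value of flk at 0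
  have hflk0 : flk 0 = 0 := by
    rw [hflk_mid 0 le_rfl hkpos.le, hf_zero 0 le_rfl,
      Real.zero_rpow (by linarith : q - 1 ≠ 0)]
    ring
  intro t
  rcases le_or_gt t 0 with ht0 | ht0
  · -- t ≤ 0 : everything vanishes
    have hI1 : (∫ τ in (0:ℝ)..t, flk τ) = 0 := by
      have heq : Set.EqOn flk (fun _ : ℝ => (0:ℝ)) (Set.uIcc 0 t) := by
        intro τ hτ
        rw [Set.uIcc_of_ge ht0] at hτ
        rcases lt_or_eq_of_le hτ.2 with h | h
        · exact hflk_neg τ h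
        · rw [h]; exact hflk0
      rw [intervalIntegral.integral_congr heq]; simp
    have hI2 : (∫ τ in (0:ℝ)..t, f τ) = 0 := by
      have heq : Set.EqOn f (fun _ : ℝ => (0:ℝ)) (Set.uIcc 0 t) := by
        intro τ hτ
        rw [Set.uIcc_of_ge ht0] at hτ
        exact hf_zero τ hτ.2
      rw [intervalIntegral.integral_congr heq]; simp
    have hflkt : flk t = 0 := by
      rcases lt_or_eq_of_le ht0 with h | h
      · exact hflk_neg t h
      · rw [h]; exact hflk0
    rw [hI1, hI2, hflkt]
    norm_num
  · rcases le_or_gt t (k:ℝ) with htk | htk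
    · -- 0 < t ≤ k
      have hIk := hmid t ht0.le htk
      have hflkt := hflk_mid t ht0.le htk
      have htq0 : (0:ℝ) ≤ t ^ q := Real.rpow_nonneg ht0.le q
      have htmul : t * t ^ (q-1) = t ^ q := by
        calc t * t ^ (q-1) = t ^ (1:ℝ) * t ^ (q-1) := by rw [Real.rpow_one]
          _ = t ^ (1 + (q-1)) := (Real.rpow_add ht0 1 (q-1)).symm
          _ = t ^ q := by norm_num
      constructor
      · rw [hIk, hflkt]
        have hA := hf2 t
        have hBpos : (0:ℝ) ≤ lam * t ^ q * (q - θ) / q :=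
          div_nonneg (mul_nonneg (mul_nonneg hlam.le htq0) (by linarith)) hq0.le
        have hfinal : t * (f t + lam * t ^ (q-1))
            - θ * ((∫ τ in (0:ℝ)..t, f τ) + lam * t ^ q / q)
            = (t * f t - θ * (∫ τ in (0:ℝ)..t, f τ)) + lam * t ^ q * (q - θ) / q := by
          rw [← htmul]; field_simp; ring
        rw [hfinal]
        have : (0:ℝ) ≤ t * f t - θ * (∫ τ in (0:ℝ)..t, f τ) := by linarith
        linarith
      · rw [hIk]
        have : (0:ℝ) ≤ lam * t ^ q / q := div_nonneg (mul_nonneg hlam.le htq0) hq0.le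
        linarith
    · -- t > k
      have hsplit : (∫ τ in (0:ℝ)..t, flk τ)
          = (∫ τ in (0:ℝ)..(k:ℝ), flk τ) + ∫ τ in (k:ℝ)..t, flk τ := by
        refine (intervalIntegral.integral_add_adjacent_intervals ?_ ?_).symm
        · exact (hcq.continuousOn.congr (fun τ hτ => by
            rw [Set.uIcc_of_le hkpos.le] at hτ
            exact hflk_mid τ hτ.1 hτ.2)).intervalIntegrable
        · exact (hcp.continuousOn.congr (fun τ hτ => by
            rw [Set.uIcc_of_le htk.le] at hτ
            exact hflk_top τ hτ.1)).intervalIntegrable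
      have hfsplit : (∫ τ in (0:ℝ)..t, f τ)
          = (∫ τ in (0:ℝ)..(k:ℝ), f τ) + ∫ τ in (k:ℝ)..t, f τ :=
        (intervalIntegral.integral_add_adjacent_intervals
          (hf_cont.intervalIntegrable _ _) (hf_cont.intervalIntegrable _ _)).symm
      have hIt : (∫ τ in (0:ℝ)..t, flk τ) = (∫ τ in (0:ℝ)..t, f τ)
          + lam * (k:ℝ) ^ q / q + lam * (k:ℝ) ^ (q-p) * ((t ^ p - (k:ℝ) ^ p) / p) := by
        rw [hsplit, hmid (k:ℝ) hkpos.le le_rfl, htopseg t htk.le, hfsplit]; ring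
      have htpos : (0:ℝ) < t := lt_trans hkpos htk
      have hflkt := hflk_top t htk.le
      have htp0 : (0:ℝ) ≤ t ^ p := Real.rpow_nonneg htpos.le p
      have hkp0 : (0:ℝ) ≤ (k:ℝ) ^ p := Real.rpow_nonneg hkpos.le p
      have hkqp0 : (0:ℝ) ≤ (k:ℝ) ^ (q-p) := Real.rpow_nonneg hkpos.le (q-p)
      have hkq : (k:ℝ) ^ q = (k:ℝ) ^ (q-p) * (k:ℝ) ^ p := by
        rw [← Real.rpow_add hkpos]; ring_nf
      have htmul : t * t ^ (p-1) = t ^ p := by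
        calc t * t ^ (p-1) = t ^ (1:ℝ) * t ^ (p-1) := by rw [Real.rpow_one]
          _ = t ^ (1 + (p-1)) := (Real.rpow_add htpos 1 (p-1)).symm
          _ = t ^ p := by norm_num
      have hkple : (k:ℝ) ^ p ≤ t ^ p :=
        Real.rpow_le_rpow hkpos.le htk.le hp0.le
      constructor
      · rw [hIt, hflkt]
        have hA := hf2 t
        have key : lam * (k:ℝ)^(q-p) * t^p - θ * (lam * (k:ℝ)^q / q)
            - θ * (lam * (k:ℝ)^(q-p) * ((t^p - (k:ℝ)^p) / p))
            = lam * (k:ℝ)^(q-p) * (t^p * (p - θ) / p + θ * (k:ℝ)^p * (q - p) / (p * q)) := by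
          rw [hkq]; field_simp; ring
        have hkey : (0:ℝ) ≤ lam * (k:ℝ)^(q-p)
            * (t^p * (p - θ) / p + θ * (k:ℝ)^p * (q - p) / (p * q)) := by
          refine mul_nonneg (mul_nonneg hlam.le hkqp0) (add_nonneg ?_ ?_)
          · exact div_nonneg (mul_nonneg htp0 (by linarith)) hp0.le
          · exact div_nonneg (mul_nonneg (mul_nonneg hθ0.le hkp0) (by linarith))
              (mul_nonneg hp0.le hq0.le)
        have hfinal : t * (f t + lam * (k:ℝ)^(q-p) * t ^ (p-1))
            - θ * ((∫ τ in (0:ℝ)..t, f τ) + lam * (k:ℝ)^q / q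
              + lam * (k:ℝ)^(q-p) * ((t^p - (k:ℝ)^p) / p))
            = (t * f t - θ * (∫ τ in (0:ℝ)..t, f τ))
              + (lam * (k:ℝ)^(q-p) * t^p - θ * (lam * (k:ℝ)^q / q)
                - θ * (lam * (k:ℝ)^(q-p) * ((t^p - (k:ℝ)^p) / p))) := by
          rw [← htmul]; ring
        rw [hfinal, key]
        have : (0:ℝ) ≤ t * f t - θ * (∫ τ in (0:ℝ)..t, f τ) := by linarith
        linarith
      · rw [hIt]
        have h1 : (0:ℝ) ≤ lam * (k:ℝ)^q / q :=
          div_nonneg (mul_nonneg hlam.le (Real.rpow_nonneg hkpos.le q)) hq0.le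
        have h2 : (0:ℝ) ≤ lam * (k:ℝ)^(q-p) * ((t^p - (k:ℝ)^p)/p) :=
          mul_nonneg (mul_nonneg hlam.le hkqp0)
            (div_nonneg (by linarith) hp0.le)
        linarith
end
end

section
/- For every u ∈ E, the coercivity inequality ((1/2)‖u‖² − ∫_{ℝ^N} G_{λ,k}(x,u) dx) − (1/θ)(‖u‖² − ∫_{ℝ^N} g_{λ,k}(x,u)·u dx) ≥ ((θ−2)/(4θ))‖u‖² holds; in particular every Palais–Smale sequence of the functional J_{λ,k}(u) := (1/2)‖u‖² − ∫_{ℝ^N} G_{λ,k}(x,u) dx is bounded in E. -/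
open MeasureTheory Filter Topology

noncomputable section

/-- The energy space `E`. -/
def memE (N : ℕ) (K V : EuclideanSpace ℝ (Fin N) → ℝ)
    (u : EuclideanSpace ℝ (Fin N) → ℝ) : Prop :=
  Measurable u ∧
  Integrable (fun z : EuclideanSpace ℝ (Fin N) × EuclideanSpace ℝ (Fin N) =>
    (u z.1 - u z.2) ^ 2 * K (z.1 - z.2)) ∧
  Integrable (fun x => V x * u x ^ 2)

/-- The norm of the energy space `E`. -/
def normE (N : ℕ) (K V : EuclideanSpace ℝ (Fin N) → ℝ)
    (u : EuclideanSpace ℝ (Fin N) → ℝ) : ℝ :=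
  Real.sqrt ((∫ z : EuclideanSpace ℝ (Fin N) × EuclideanSpace ℝ (Fin N),
    (u z.1 - u z.2) ^ 2 * K (z.1 - z.2)) + ∫ x, V x * u x ^ 2)

/-- The inner product of the energy space `E`. -/
def innerE (N : ℕ) (K V : EuclideanSpace ℝ (Fin N) → ℝ)
    (u v : EuclideanSpace ℝ (Fin N) → ℝ) : ℝ :=
  (∫ z : EuclideanSpace ℝ (Fin N) × EuclideanSpace ℝ (Fin N),
    (u z.1 - u z.2) * (v z.1 - v z.2) * K (z.1 - z.2)) + ∫ x, V x * u x * v x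

/-- The truncated nonlinearity `f_{λ,k}`. -/
def flk (f : ℝ → ℝ) (lam : ℝ) (k : ℕ) (p q : ℝ) (t : ℝ) : ℝ :=
  if t < 0 then 0
  else if t ≤ (k : ℝ) then f t + lam * t ^ (q - 1)
  else f t + lam * (k : ℝ) ^ (q - p) * t ^ (p - 1)

section AuxMin

lemma myMin_II {f g : ℝ → ℝ} {a b : ℝ} (hf : IntervalIntegrable f volume a b)
    (hg : IntervalIntegrable g volume a b) :
    IntervalIntegrable (fun t => min (f t) (g t)) volume a b := by
  have h : (fun t => min (f t) (g t)) = fun t => ((f t + g t) - |f t - g t|) / 2 := by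
    funext t; rcases le_total (f t) (g t) with h | h
    · rw [min_eq_left h, abs_of_nonpos (sub_nonpos.2 h)]; ring
    · rw [min_eq_right h, abs_of_nonneg (sub_nonneg.2 h)]; ring
  rw [h]; exact ((hf.add hg).sub ((hf.sub hg).abs)).div_const 2

lemma cont_rpow_const {c : ℝ} (hc : 0 < c) : Continuous fun t : ℝ => t ^ c :=
  continuous_iff_continuousAt.2 fun x => Real.continuousAt_rpow_const x c (Or.inr hc.le)

/-- integral from 0 to a nonpositive t of a function vanishing on (-∞,0] is 0 -/
lemma int_zero_of_nonpos {t : ℝ} (h : t ≤ 0) (g : ℝ → ℝ) (hg : ∀ τ, τ ≤ 0 → g τ = 0) :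
    ∫ τ in (0:ℝ)..t, g τ = 0 := by
  rw [intervalIntegral.integral_congr (g := fun _ => (0:ℝ)) ?_, intervalIntegral.integral_const,
    smul_zero]
  intro τ hτ
  rw [Set.uIcc_of_ge h] at hτ
  exact hg τ hτ.2

def phiAux (lam : ℝ) (k : ℕ) (p q : ℝ) (t : ℝ) : ℝ :=
  if t ≤ (k : ℝ) then lam * (max t 0) ^ (q - 1) else lam * (k : ℝ) ^ (q - p) * t ^ (p - 1)

end AuxMin

section FlkProps

variable {f : ℝ → ℝ} {lam p q θ : ℝ} {k : ℕ}

lemma phiAux_cont (hk : 0 < k) (hp1 : 1 < p) (hq1 : p < q) :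
    Continuous (phiAux lam k p q) := by
  have hk0 : (0:ℝ) < (k:ℝ) := by exact_mod_cast hk
  unfold phiAux
  apply Continuous.if_le
  · exact continuous_const.mul ((cont_rpow_const (by linarith)).comp
      (continuous_id.max continuous_const))
  · exact continuous_const.mul (cont_rpow_const (by linarith))
  · exact continuous_id
  · exact continuous_const
  · intro t ht
    subst ht
    have h2 : (k:ℝ) ^ (q - p) * (k:ℝ) ^ (p - 1) = (k:ℝ) ^ (q - 1) := by
      rw [← Real.rpow_add hk0]; ring_nf
    rw [max_eq_left hk0.le, ← h2]; ring

lemma flk_eq_add (hf_zero : ∀ t : ℝ, t ≤ 0 → f t = 0) (hq1 : 1 < q) :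
    ∀ t, flk f lam k p q t = f t + phiAux lam k p q t := by
  intro t
  unfold flk phiAux
  rcases lt_trichotomy t 0 with h | h | h
  · rw [if_pos h, if_pos (h.le.trans (Nat.cast_nonneg k)), hf_zero t h.le,
      max_eq_right h.le, Real.zero_rpow (by linarith : q - 1 ≠ 0)]
    ring
  · subst h
    simp [Real.zero_rpow (show q - 1 ≠ 0 by linarith), Nat.cast_nonneg]
  · rw [if_neg (not_lt.2 h.le)]
    rcases le_or_gt t (k:ℝ) with h2 | h2
    · rw [if_pos h2, if_pos h2, max_eq_left h.le]
    · rw [if_neg (not_le.2 h2), if_neg (not_le.2 h2)]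

lemma flk_cont (hf_cont : Continuous f) (hf_zero : ∀ t : ℝ, t ≤ 0 → f t = 0)
    (hk : 0 < k) (hp1 : 1 < p) (hq1 : 1 < q) (hpq : p < q) :
    Continuous (flk f lam k p q) := by
  have : flk f lam k p q = fun t => f t + phiAux lam k p q t :=
    funext (flk_eq_add hf_zero hq1)
  rw [this]
  exact hf_cont.add (phiAux_cont hk hp1 hpq)

lemma flk_nonneg (hf_nonneg : ∀ t : ℝ, 0 < t → 0 ≤ f t)
    (hf_zero : ∀ t : ℝ, t ≤ 0 → f t = 0) (hlam : 0 ≤ lam) :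
    ∀ t, 0 ≤ flk f lam k p q t := by
  intro t
  have hf' : ∀ s : ℝ, 0 ≤ s → 0 ≤ f s := by
    intro s hs
    rcases hs.lt_or_eq with h | h
    · exact hf_nonneg s h
    · rw [← h, hf_zero 0 le_rfl]
  unfold flk
  split_ifs with h1 h2
  · exact le_rfl
  · exact add_nonneg (hf' t (not_lt.1 h1)) (mul_nonneg hlam (Real.rpow_nonneg (not_lt.1 h1) _))
  · exact add_nonneg (hf' t (not_lt.1 h1))
      (mul_nonneg (mul_nonneg hlam (Real.rpow_nonneg (Nat.cast_nonneg k) _))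
        (Real.rpow_nonneg (not_lt.1 h1) _))

lemma flk_zero_of_nonpos (hf_zero : ∀ t : ℝ, t ≤ 0 → f t = 0) (hq1 : 1 < q) :
    ∀ t : ℝ, t ≤ 0 → flk f lam k p q t = 0 := by
  intro t ht
  unfold flk
  rcases ht.lt_or_eq with h | h
  · rw [if_pos h]
  · subst h
    simp [hf_zero 0 le_rfl, Real.zero_rpow (show q - 1 ≠ 0 by linarith), Nat.cast_nonneg]

end FlkProps
section FlkInt

variable {f : ℝ → ℝ} {lam p q θ : ℝ} {k : ℕ}

lemma phi_int_le (hq1 : 1 < q) {t : ℝ} (ht0 : 0 ≤ t) (htk : t ≤ (k:ℝ)) :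
    ∫ τ in (0:ℝ)..t, phiAux lam k p q τ = lam * t ^ q / q := by
  rw [intervalIntegral.integral_congr (g := fun τ => lam * τ ^ (q - 1)) ?_]
  · rw [intervalIntegral.integral_const_mul, integral_rpow (Or.inl (by linarith))]
    have hq' : q - 1 + 1 = q := by ring
    rw [hq', Real.zero_rpow (by linarith : q ≠ 0)]
    ring
  · intro τ hτ
    rw [Set.uIcc_of_le ht0] at hτ
    have h1 : τ ≤ (k:ℝ) := hτ.2.trans htk
    simp [phiAux, h1, max_eq_left hτ.1]

lemma phi_int_ge (hk : 0 < k) (hp1 : 1 < p) (hq1 : 1 < q) (hpq : p < q) {t : ℝ}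
    (ht : (k:ℝ) ≤ t) :
    ∫ τ in (0:ℝ)..t, phiAux lam k p q τ
      = lam * (k:ℝ) ^ q / q + lam * (k:ℝ) ^ (q - p) * ((t ^ p - (k:ℝ) ^ p) / p) := by
  have hk0 : (0:ℝ) < (k:ℝ) := by exact_mod_cast hk
  have hII := (phiAux_cont (lam := lam) hk hp1 hpq).intervalIntegrable (μ := volume)
  rw [← intervalIntegral.integral_add_adjacent_intervals (b := (k:ℝ)) (hII 0 k) (hII k t),
    phi_int_le hq1 hk0.le le_rfl]
  congr 1
  rw [intervalIntegral.integral_congr (g := fun τ => lam * (k:ℝ) ^ (q - p) * τ ^ (p - 1)) ?_]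
  · rw [intervalIntegral.integral_const_mul, integral_rpow (Or.inl (by linarith))]
    have hp' : p - 1 + 1 = p := by ring
    rw [hp']
  · intro τ hτ
    rw [Set.uIcc_of_le ht] at hτ
    rcases hτ.1.lt_or_eq with h | h
    · simp [phiAux, not_le.2 h]
    · rw [← h]
      have h2 : (k:ℝ) ^ (q - p) * (k:ℝ) ^ (p - 1) = (k:ℝ) ^ (q - 1) := by
        rw [← Real.rpow_add hk0]; ring_nf
      simp only [phiAux, le_refl, if_pos, max_eq_left hk0.le, ← h2]
      ring

lemma Fl_eq (hf_cont : Continuous f) (hf_zero : ∀ t : ℝ, t ≤ 0 → f t = 0)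
    (hk : 0 < k) (hp1 : 1 < p) (hq1 : 1 < q) (hpq : p < q) (t : ℝ) :
    ∫ τ in (0:ℝ)..t, flk f lam k p q τ
      = (∫ τ in (0:ℝ)..t, f τ) + ∫ τ in (0:ℝ)..t, phiAux lam k p q τ := by
  have h : flk f lam k p q = fun τ => f τ + phiAux lam k p q τ :=
    funext (flk_eq_add hf_zero hq1)
  rw [h, intervalIntegral.integral_add (hf_cont.intervalIntegrable 0 t)
    ((phiAux_cont hk hp1 hpq).intervalIntegrable 0 t)]

end FlkInt
section FlkAR

variable {f : ℝ → ℝ} {lam p q θ : ℝ} {k : ℕ}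

lemma Fl_zero_of_nonpos (hf_zero : ∀ t : ℝ, t ≤ 0 → f t = 0) (hq1 : 1 < q)
    {t : ℝ} (ht : t ≤ 0) : ∫ τ in (0:ℝ)..t, flk f lam k p q τ = 0 :=
  int_zero_of_nonpos ht _ (flk_zero_of_nonpos hf_zero hq1)

lemma flk_AR (hf_cont : Continuous f) (hf_nonneg : ∀ t : ℝ, 0 < t → 0 ≤ f t)
    (hf_zero : ∀ t : ℝ, t ≤ 0 → f t = 0)
    (hf2 : ∀ t : ℝ, θ * (∫ τ in (0 : ℝ)..t, f τ) ≤ t * f t)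
    (hk : 0 < k) (hlam : 0 < lam) (hθ2 : 2 < θ) (hθp : θ < p) (hp2 : 2 < p) (hpq : p < q) :
    ∀ t : ℝ, θ * (∫ τ in (0:ℝ)..t, flk f lam k p q τ) ≤ t * flk f lam k p q t := by
  have hp1 : 1 < p := by linarith
  have hq1 : 1 < q := by linarith
  have hk0 : (0:ℝ) < (k:ℝ) := by exact_mod_cast hk
  intro t
  rcases le_or_gt t 0 with ht | ht
  · rw [Fl_zero_of_nonpos hf_zero hq1 ht, flk_zero_of_nonpos hf_zero hq1 t ht]
    simp
  · rw [Fl_eq hf_cont hf_zero hk hp1 hq1 hpq]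
    have htq : t ^ q = t ^ (q - 1) * t := by
      rw [← Real.rpow_add_one (ne_of_gt ht)]; ring_nf
    have htq0 : 0 ≤ t ^ q := Real.rpow_nonneg ht.le q
    rcases le_or_gt t (k:ℝ) with htk | htk
    · rw [phi_int_le hq1 ht.le htk]
      have hflk : flk f lam k p q t = f t + lam * t ^ (q - 1) := by
        unfold flk; rw [if_neg (not_lt.2 ht.le), if_pos htk]
      rw [hflk]
      have h1 : θ * (lam * t ^ q / q) ≤ lam * t ^ q := by
        rw [mul_div_assoc' θ, div_le_iff₀ (by linarith : (0:ℝ) < q)]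
        nlinarith [mul_nonneg hlam.le htq0]
      have h2 := hf2 t
      calc θ * ((∫ τ in (0:ℝ)..t, f τ) + lam * t ^ q / q)
          = θ * (∫ τ in (0:ℝ)..t, f τ) + θ * (lam * t ^ q / q) := by ring
        _ ≤ t * f t + lam * t ^ q := by linarith
        _ = t * (f t + lam * t ^ (q - 1)) := by rw [htq]; ring
    · rw [phi_int_ge hk hp1 hq1 hpq htk.le]
      have hflk : flk f lam k p q t = f t + lam * (k:ℝ) ^ (q - p) * t ^ (p - 1) := by
        unfold flk; rw [if_neg (not_lt.2 ht.le), if_neg (not_le.2 htk)]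
      rw [hflk]
      have htp : t ^ p = t ^ (p - 1) * t := by
        rw [← Real.rpow_add_one (ne_of_gt ht)]; ring_nf
      have hkq : (k:ℝ) ^ q = (k:ℝ) ^ (q - p) * (k:ℝ) ^ p := by
        rw [← Real.rpow_add hk0]; ring_nf
      -- abbreviations
      set a := (k:ℝ) ^ (q - p) with ha
      set b := (k:ℝ) ^ p with hb
      set T := t ^ p with hT
      have ha0 : 0 < a := Real.rpow_pos_of_pos hk0 _
      have hb0 : 0 < b := Real.rpow_pos_of_pos hk0 _
      have hbT : b ≤ T := Real.rpow_le_rpow hk0.le htk.le (by linarith)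
      have hΦ : θ * (lam * (k:ℝ) ^ q / q + lam * a * ((T - b) / p)) ≤ lam * a * T := by
        rw [hkq]
        have h1 : lam * (a * b) / q ≤ lam * (a * b) / p := by
          apply div_le_div_of_nonneg_left _ (by linarith) (by linarith)
          positivity
        have h2 : θ * (lam * (a * b) / p + lam * a * ((T - b) / p)) ≤ lam * a * T := by
          have hX : lam * (a * b) / p + lam * a * ((T - b) / p)
              = (lam * a * T) / p := by field_simp; ring
          rw [hX, mul_div_assoc' θ, div_le_iff₀ (by linarith : (0:ℝ) < p)]
          nlinarith [mul_nonneg (mul_nonneg hlam.le ha0.le) (le_trans hb0.le hbT)]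
        calc θ * (lam * (a * b) / q + lam * a * ((T - b) / p))
            ≤ θ * (lam * (a * b) / p + lam * a * ((T - b) / p)) := by nlinarith
          _ ≤ lam * a * T := h2
      have h2 := hf2 t
      calc θ * ((∫ τ in (0:ℝ)..t, f τ) + (lam * (k:ℝ) ^ q / q + lam * a * ((T - b) / p)))
          = θ * (∫ τ in (0:ℝ)..t, f τ)
            + θ * (lam * (k:ℝ) ^ q / q + lam * a * ((T - b) / p)) := by ring
        _ ≤ t * f t + lam * a * T := by linarith
        _ = t * (f t + lam * a * t ^ (p - 1)) := by rw [htp]; ring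

lemma flk_lower (hf_cont : Continuous f) (hf_nonneg : ∀ t : ℝ, 0 < t → 0 ≤ f t)
    (hf_zero : ∀ t : ℝ, t ≤ 0 → f t = 0)
    (hk : 0 < k) (hlam : 0 < lam) (hp2 : 2 < p) (hpq : p < q) :
    ∀ t : ℝ, 0 ≤ t →
      lam * (k:ℝ) ^ (q - p) / p * t ^ p - lam * (k:ℝ) ^ q / p
        ≤ ∫ τ in (0:ℝ)..t, flk f lam k p q τ := by
  have hp1 : 1 < p := by linarith
  have hq1 : 1 < q := by linarith
  have hp0 : (0:ℝ) < p := by linarith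
  have hk0 : (0:ℝ) < (k:ℝ) := by exact_mod_cast hk
  intro t ht
  have hF0 : 0 ≤ ∫ τ in (0:ℝ)..t, f τ := by
    apply intervalIntegral.integral_nonneg ht
    intro τ hτ
    rcases hτ.1.lt_or_eq with h | h
    · exact hf_nonneg τ h
    · rw [← h, hf_zero 0 le_rfl]
  rw [Fl_eq hf_cont hf_zero hk hp1 hq1 hpq]
  have hkq : (k:ℝ) ^ q = (k:ℝ) ^ (q - p) * (k:ℝ) ^ p := by
    rw [← Real.rpow_add hk0]; ring_nf
  have ha0 : (0:ℝ) < (k:ℝ) ^ (q - p) := Real.rpow_pos_of_pos hk0 _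
  rcases le_or_gt t (k:ℝ) with htk | htk
  · rw [phi_int_le hq1 ht htk]
    have h1 : t ^ p ≤ (k:ℝ) ^ p := Real.rpow_le_rpow ht htk hp0.le
    have h2 : 0 ≤ lam * t ^ q / q := by positivity
    have h3 : lam * (k:ℝ) ^ (q - p) / p * t ^ p ≤ lam * (k:ℝ) ^ q / p := by
      rw [hkq]
      rw [div_mul_eq_mul_div, div_le_div_iff₀ hp0 hp0]
      have h1' := mul_le_mul_of_nonneg_left h1 (mul_nonneg hlam.le ha0.le)
      have h1'' := mul_le_mul_of_nonneg_right h1' hp0.le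
      nlinarith [h1'']
    linarith
  · rw [phi_int_ge hk hp1 hq1 hpq htk.le]
    have h4 : 0 ≤ lam * (k:ℝ) ^ q / q := by positivity
    have h5 : lam * (k:ℝ) ^ (q - p) * ((t ^ p - (k:ℝ) ^ p) / p)
        = lam * (k:ℝ) ^ (q - p) / p * t ^ p - lam * (k:ℝ) ^ q / p := by
      rw [hkq]; ring
    linarith

end FlkAR
section Growth

variable {f : ℝ → ℝ} {lam p q e : ℝ} {k : ℕ}

lemma f_growth (hf_cont : Continuous f) (hf_nonneg : ∀ t : ℝ, 0 < t → 0 ≤ f t)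
    (hf_zero : ∀ t : ℝ, t ≤ 0 → f t = 0) (hp0 : 0 < p) (he : 0 ≤ e)
    (hf1_zero : ∃ C : ℝ, ∀ᶠ t in 𝓝[>] (0 : ℝ), f t ≤ C * t ^ e)
    (hf1_infty : ∃ C : ℝ, ∀ᶠ t in atTop, f t ≤ C * t ^ (p - 1)) :
    ∃ M C : ℝ, 0 ≤ M ∧ 0 ≤ C ∧ ∀ t : ℝ, 0 ≤ t → f t * t ≤ M + C * t ^ p := by
  obtain ⟨C₀, hC₀⟩ := hf1_zero
  obtain ⟨C₁, hC₁⟩ := hf1_infty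
  rw [eventually_nhdsWithin_iff, Metric.eventually_nhds_iff] at hC₀
  obtain ⟨δ, hδ0, hδ⟩ := hC₀
  obtain ⟨T, hT⟩ := eventually_atTop.1 hC₁
  set δ' := min δ 1 with hδ'
  have hδ'0 : 0 < δ' := lt_min hδ0 one_pos
  have hδ'1 : δ' ≤ 1 := min_le_right _ _
  set T' := max T 1 with hT'
  have hT'1 : 1 ≤ T' := le_max_right _ _
  -- bound on the middle compact interval
  have hmid : ∃ M₂ : ℝ, 0 ≤ M₂ ∧ ∀ t ∈ Set.Icc δ' T', f t ≤ M₂ := by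
    obtain ⟨z, hz, hzmax⟩ := (isCompact_Icc (a := δ') (b := T')).exists_isMaxOn
      (Set.nonempty_Icc.2 (by linarith)) hf_cont.continuousOn
    exact ⟨max (f z) 0, le_max_right _ _, fun t ht => (hzmax ht).trans (le_max_left _ _)⟩
  obtain ⟨M₂, hM₂0, hM₂⟩ := hmid
  refine ⟨max |C₀| (M₂ * T'), |C₁|, le_trans (abs_nonneg _) (le_max_left _ _), abs_nonneg _,
    fun t ht => ?_⟩
  have htp0 : 0 ≤ t ^ p := Real.rpow_nonneg ht p
  have hCtp : 0 ≤ |C₁| * t ^ p := mul_nonneg (abs_nonneg _) htp0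
  rcases eq_or_lt_of_le ht with h0 | h0
  · rw [← h0, hf_zero 0 le_rfl]
    simp only [zero_mul, mul_zero]
    positivity
  rcases lt_or_ge t δ' with h1 | h1
  · -- small t
    have hft : f t ≤ C₀ * t ^ e := by
      apply hδ ?_ h0
      rw [Real.dist_eq, sub_zero, abs_of_nonneg ht]
      exact h1.trans_le (min_le_left _ _)
    have hte : t ^ e ≤ 1 := Real.rpow_le_one ht (le_trans h1.le hδ'1) he
    have hte0 : 0 ≤ t ^ e := Real.rpow_nonneg ht e
    have h2 : f t * t ≤ C₀ * t ^ e * t := mul_le_mul_of_nonneg_right hft ht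
    have h3 : C₀ * t ^ e * t ≤ |C₀| := by
      have ht1 : t ≤ 1 := le_trans h1.le hδ'1
      have : C₀ * t ^ e * t ≤ |C₀| * t ^ e * t := by
        apply mul_le_mul_of_nonneg_right _ ht
        exact mul_le_mul_of_nonneg_right (le_abs_self C₀) hte0
      calc C₀ * t ^ e * t ≤ |C₀| * t ^ e * t := this
        _ ≤ |C₀| * 1 * 1 := by
            apply mul_le_mul (mul_le_mul le_rfl hte hte0 (abs_nonneg _)) ht1 ht
            positivity
        _ = |C₀| := by ring
    have h4 : |C₀| ≤ max |C₀| (M₂ * T') := le_max_left _ _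
    linarith
  rcases le_or_gt t T' with h2 | h2
  · -- middle t
    have hft := hM₂ t ⟨h1, h2⟩
    have h3 : f t * t ≤ M₂ * T' :=
      mul_le_mul hft h2 ht hM₂0
    have h4 : M₂ * T' ≤ max |C₀| (M₂ * T') := le_max_right _ _
    linarith
  · -- large t
    have hft : f t ≤ C₁ * t ^ (p - 1) := hT t (le_trans (le_max_left _ _) h2.le)
    have htp : t ^ (p - 1) * t = t ^ p := by
      rw [← Real.rpow_add_one (by linarith : t ≠ 0)]; ring_nf
    have h3 : f t * t ≤ C₁ * t ^ p := by
      calc f t * t ≤ C₁ * t ^ (p - 1) * t := mul_le_mul_of_nonneg_right hft ht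
        _ = C₁ * t ^ p := by rw [mul_assoc, htp]
    have h4 : C₁ * t ^ p ≤ |C₁| * t ^ p :=
      mul_le_mul_of_nonneg_right (le_abs_self C₁) htp0
    have h5 : (0:ℝ) ≤ max |C₀| (M₂ * T') := le_trans (abs_nonneg _) (le_max_left _ _)
    linarith

lemma flk_mul_le (hf_cont : Continuous f) (hf_nonneg : ∀ t : ℝ, 0 < t → 0 ≤ f t)
    (hf_zero : ∀ t : ℝ, t ≤ 0 → f t = 0) (hp2 : 2 < p) (hpq : p < q)
    (hk : 0 < k) (hlam : 0 < lam) (he : 0 ≤ e)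
    (hf1_zero : ∃ C : ℝ, ∀ᶠ t in 𝓝[>] (0 : ℝ), f t ≤ C * t ^ e)
    (hf1_infty : ∃ C : ℝ, ∀ᶠ t in atTop, f t ≤ C * t ^ (p - 1)) :
    ∃ M C : ℝ, 0 ≤ M ∧ 0 ≤ C ∧
      ∀ t : ℝ, flk f lam k p q t * t ≤ M + C * (max t 0) ^ p := by
  have hp0 : (0:ℝ) < p := by linarith
  have hk0 : (0:ℝ) < (k:ℝ) := by exact_mod_cast hk
  obtain ⟨M, C, hM0, hC0, hMC⟩ := f_growth hf_cont hf_nonneg hf_zero hp0 he hf1_zero hf1_infty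
  refine ⟨M, C + lam * (k:ℝ) ^ (q - p), hM0, by positivity, fun t => ?_⟩
  rcases lt_or_ge t 0 with ht | ht
  · rw [flk_zero_of_nonpos hf_zero (by linarith) t ht.le, zero_mul, max_eq_right ht.le,
      Real.zero_rpow (by linarith : p ≠ 0), mul_zero, add_zero]
    exact hM0
  · rw [max_eq_left ht]
    have htp0 : 0 ≤ t ^ p := Real.rpow_nonneg ht p
    have hlk : lam * (k:ℝ) ^ (q - p) * t ^ (p - 1) * t ≤ lam * (k:ℝ) ^ (q - p) * t ^ p := by
      rcases eq_or_lt_of_le ht with h0 | h0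
      · rw [← h0, Real.zero_rpow (by linarith : p - 1 ≠ 0), Real.zero_rpow (by linarith : p ≠ 0)]
        simp
      · have : t ^ (p - 1) * t = t ^ p := by
          rw [← Real.rpow_add_one (ne_of_gt h0)]; ring_nf
        rw [mul_assoc, this]
    unfold flk
    rw [if_neg (not_lt.2 ht)]
    rcases le_or_gt t (k:ℝ) with htk | htk
    · rw [if_pos htk]
      have hq' : lam * t ^ (q - 1) * t ≤ lam * (k:ℝ) ^ (q - p) * t ^ p := by
        rcases eq_or_lt_of_le ht with h0 | h0
        · rw [← h0, Real.zero_rpow (by linarith : q - 1 ≠ 0), Real.zero_rpow (by linarith : p ≠ 0)]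
          simp
        · have h1 : t ^ (q - 1) * t = t ^ (q - p) * t ^ p := by
            rw [← Real.rpow_add h0, ← Real.rpow_add_one (ne_of_gt h0)]; ring_nf
          rw [mul_assoc, h1, ← mul_assoc]
          apply mul_le_mul_of_nonneg_right _ htp0
          exact mul_le_mul_of_nonneg_left
            (Real.rpow_le_rpow h0.le htk (by linarith)) hlam.le
      have := hMC t ht
      nlinarith [htp0]
    · rw [if_neg (not_le.2 htk)]
      have := hMC t ht
      nlinarith [htp0]

end Growth

/-- The penalized nonlinearity `g_{λ,k}`, with `ν = 2θ/(θ−2)`. -/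
def glk (N : ℕ) (V : EuclideanSpace ℝ (Fin N) → ℝ) (f : ℝ → ℝ)
    (lam : ℝ) (k : ℕ) (p q θ R : ℝ) (x : EuclideanSpace ℝ (Fin N)) (t : ℝ) : ℝ :=
  if ‖x‖ ≤ R then flk f lam k p q t
  else if 0 ≤ t then min (flk f lam k p q t) (V x * t / (2 * θ / (θ - 2)))
  else 0

/-- Its primitive `G_{λ,k}`. -/
def Glk (N : ℕ) (V : EuclideanSpace ℝ (Fin N) → ℝ) (f : ℝ → ℝ)
    (lam : ℝ) (k : ℕ) (p q θ R : ℝ) (x : EuclideanSpace ℝ (Fin N)) (t : ℝ) : ℝ :=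
  ∫ τ in (0 : ℝ)..t, glk N V f lam k p q θ R x τ

/-- The auxiliary energy functional `J_{λ,k}`. -/
def Jlk (N : ℕ) (K V : EuclideanSpace ℝ (Fin N) → ℝ) (f : ℝ → ℝ)
    (lam : ℝ) (k : ℕ) (p q θ R : ℝ) (u : EuclideanSpace ℝ (Fin N) → ℝ) : ℝ :=
  (1 / 2) * (normE N K V u) ^ 2 - ∫ x, Glk N V f lam k p q θ R x (u x)

set_option maxHeartbeats 1600000 in
/-- Coercivity inequality for `J_{λ,k}` and boundedness of
Palais–Smale sequences. -/
theorem statement_5 (N : ℕ) (s : ℝ) (hs0 : 0 < s) (hs1 : s < 1) (hN : 2 * s < N)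
    (K : EuclideanSpace ℝ (Fin N) → ℝ) (hK_meas : Measurable K)
    (hK_pos : ∀ x, 0 < K x)
    (hK1 : ∀ x, K (-x) = K x)
    (hK2 : ∃ C₁ > (0 : ℝ), ∀ᵐ x : EuclideanSpace ℝ (Fin N),
      C₁ * ‖x‖ ^ (-((N : ℝ) + 2 * s)) ≤ K x)
    (hK3 : Integrable (fun x : EuclideanSpace ℝ (Fin N) => min (‖x‖ ^ 2) 1 * K x))
    (f : ℝ → ℝ) (hf_cont : Continuous f) (hf_ne : ∃ t : ℝ, f t ≠ 0)
    (hf_nonneg : ∀ t : ℝ, 0 < t → 0 ≤ f t)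
    (hf_zero : ∀ t : ℝ, t ≤ 0 → f t = 0)
    (p : ℝ) (hp2 : 2 < p) (hps : p < 2 * N / (N - 2 * s))
    (hf1_zero : ∃ C : ℝ, ∀ᶠ t in 𝓝[>] (0 : ℝ), f t ≤ C * t ^ (2 * N / (N - 2 * s) - 1))
    (hf1_infty : ∃ C : ℝ, ∀ᶠ t in atTop, f t ≤ C * t ^ (p - 1))
    (θ : ℝ) (hθ2 : 2 < θ) (hθp : θ < p)
    (hf2 : ∀ t : ℝ, θ * (∫ τ in (0 : ℝ)..t, f τ) ≤ t * f t)
    (V : EuclideanSpace ℝ (Fin N) → ℝ) (hV_meas : Measurable V)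
    (hV_nonneg : ∀ᵐ x : EuclideanSpace ℝ (Fin N), 0 ≤ V x)
    (hV_locbdd : ∀ r : ℝ, ∃ C : ℝ, ∀ᵐ x : EuclideanSpace ℝ (Fin N), ‖x‖ ≤ r → V x ≤ C)
    (R : ℝ) (hR : 1 < R)
    (lam : ℝ) (hlam : 0 < lam) (k : ℕ) (hk : 0 < k) (q : ℝ) (hq : p < q) :
    (∀ u : EuclideanSpace ℝ (Fin N) → ℝ, memE N K V u →
      ((1 / 2) * (normE N K V u) ^ 2 - ∫ x, Glk N V f lam k p q θ R x (u x)) -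
        (1 / θ) * ((normE N K V u) ^ 2 - ∫ x, glk N V f lam k p q θ R x (u x) * u x) ≥
        ((θ - 2) / (4 * θ)) * (normE N K V u) ^ 2) ∧
    (∀ u : ℕ → EuclideanSpace ℝ (Fin N) → ℝ,
      (∀ n, memE N K V (u n)) →
      (∃ c : ℝ, Tendsto (fun n => Jlk N K V f lam k p q θ R (u n)) atTop (𝓝 c)) →
      (∃ ε : ℕ → ℝ, Tendsto ε atTop (𝓝 0) ∧
        ∀ n, ∀ v : EuclideanSpace ℝ (Fin N) → ℝ, memE N K V v →
          |innerE N K V (u n) v - ∫ x, glk N V f lam k p q θ R x (u n x) * v x| ≤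
            ε n * normE N K V v) →
      ∃ M : ℝ, ∀ n, normE N K V (u n) ≤ M) := by
  -- numeric facts
  have hp1 : 1 < p := by linarith
  have hq1 : 1 < q := by linarith
  have hp0 : (0 : ℝ) < p := by linarith
  have hθ0 : (0 : ℝ) < θ := by linarith
  have hk0 : (0 : ℝ) < (k : ℝ) := by exact_mod_cast hk
  have hν0 : (0 : ℝ) < 2 * θ / (θ - 2) := by
    apply div_pos <;> linarith
  have hNs : (0 : ℝ) < (N : ℝ) - 2 * s := by linarith
  have he : (0 : ℝ) ≤ 2 * (N : ℝ) / ((N : ℝ) - 2 * s) - 1 := by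
    have h2 : (1 : ℝ) ≤ 2 * (N : ℝ) / ((N : ℝ) - 2 * s) := by
      rw [le_div_iff₀ hNs]
      have : (0:ℝ) ≤ (N:ℝ) := Nat.cast_nonneg N
      linarith
    linarith
  -- flk facts
  have hflk_cont : Continuous (flk f lam k p q) := flk_cont hf_cont hf_zero hk hp1 hq1 hq
  have hflk0 : ∀ t, 0 ≤ flk f lam k p q t := flk_nonneg hf_nonneg hf_zero hlam.le
  have hflkz : ∀ t : ℝ, t ≤ 0 → flk f lam k p q t = 0 := flk_zero_of_nonpos hf_zero hq1
  have hflkmul0 : ∀ t : ℝ, 0 ≤ flk f lam k p q t * t := by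
    intro t
    rcases le_or_gt t 0 with h | h
    · rw [hflkz t h, zero_mul]
    · exact mul_nonneg (hflk0 t) h.le
  have hAR := flk_AR hf_cont hf_nonneg hf_zero hf2 hk hlam hθ2 hθp hp2 hq
  have hlow := flk_lower (lam := lam) (k := k) hf_cont hf_nonneg hf_zero hk hlam hp2 hq
  obtain ⟨M, C, hM0, hC0, hMC⟩ := flk_mul_le (lam := lam) (k := k) hf_cont hf_nonneg hf_zero
    hp2 hq hk hlam he hf1_zero hf1_infty
  set c₂ := lam * (k:ℝ) ^ (q - p) / p with hc₂def
  set c₃ := lam * (k:ℝ) ^ q / p with hc₃def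
  have hc₂ : 0 < c₂ := by rw [hc₂def]; positivity
  have hc₃0 : 0 ≤ c₃ := by rw [hc₃def]; positivity
  -- glk / Glk pointwise facts
  have hglk_ball : ∀ x : EuclideanSpace ℝ (Fin N), ‖x‖ ≤ R →
      ∀ t, glk N V f lam k p q θ R x t = flk f lam k p q t := fun x hx t => if_pos hx
  have hGlk_ball : ∀ x : EuclideanSpace ℝ (Fin N), ‖x‖ ≤ R →
      ∀ t, Glk N V f lam k p q θ R x t = ∫ τ in (0:ℝ)..t, flk f lam k p q τ := by
    intro x hx t
    exact intervalIntegral.integral_congr fun τ _ => hglk_ball x hx τ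
  have hglk_zero : ∀ (x : EuclideanSpace ℝ (Fin N)) (t : ℝ), t ≤ 0 →
      glk N V f lam k p q θ R x t = 0 := by
    intro x t ht
    unfold glk
    split_ifs with h1 h2
    · exact hflkz t ht
    · have ht0 : t = 0 := le_antisymm ht h2
      rw [ht0, hflkz 0 le_rfl]
      simp
    · rfl
  have hGlk_zero : ∀ (x : EuclideanSpace ℝ (Fin N)) (t : ℝ), t ≤ 0 →
      Glk N V f lam k p q θ R x t = 0 := by
    intro x t ht
    exact int_zero_of_nonpos ht _ (hglk_zero x)
  have hglk_mul_nonneg : ∀ x : EuclideanSpace ℝ (Fin N), 0 ≤ V x →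
      ∀ t, 0 ≤ glk N V f lam k p q θ R x t * t := by
    intro x hVx t
    rcases le_or_gt t 0 with h | h
    · rw [hglk_zero x t h, zero_mul]
    · apply mul_nonneg _ h.le
      unfold glk
      split_ifs with h1 h2
      · exact hflk0 t
      · exact le_min (hflk0 t) (div_nonneg (mul_nonneg hVx h.le) hν0.le)
      · exact le_rfl
  have hglk_mul_out : ∀ x : EuclideanSpace ℝ (Fin N), ¬ (‖x‖ ≤ R) → 0 ≤ V x →
      ∀ t, glk N V f lam k p q θ R x t * t ≤ V x * t ^ 2 / (2 * θ / (θ - 2)) := by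
    intro x hx hVx t
    have hrhs : 0 ≤ V x * t ^ 2 / (2 * θ / (θ - 2)) :=
      div_nonneg (mul_nonneg hVx (sq_nonneg t)) hν0.le
    rcases le_or_gt t 0 with h | h
    · rw [hglk_zero x t h, zero_mul]; exact hrhs
    · unfold glk
      rw [if_neg hx, if_pos h.le]
      calc min (flk f lam k p q t) (V x * t / (2 * θ / (θ - 2))) * t
          ≤ (V x * t / (2 * θ / (θ - 2))) * t :=
            mul_le_mul_of_nonneg_right (min_le_right _ _) h.le
        _ = V x * t ^ 2 / (2 * θ / (θ - 2)) := by ring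
  have hGlk_out : ∀ x : EuclideanSpace ℝ (Fin N), ¬ (‖x‖ ≤ R) → 0 ≤ V x →
      ∀ t, Glk N V f lam k p q θ R x t ≤ V x * t ^ 2 * ((θ - 2) / (4 * θ)) := by
    intro x hx hVx t
    have hrhs : 0 ≤ V x * t ^ 2 * ((θ - 2) / (4 * θ)) := by
      apply mul_nonneg (mul_nonneg hVx (sq_nonneg t))
      apply div_nonneg <;> linarith
    rcases le_or_gt t 0 with ht | ht
    · rw [hGlk_zero x t ht]; exact hrhs
    · have hcongr : Glk N V f lam k p q θ R x t
          = ∫ τ in (0:ℝ)..t, min (flk f lam k p q τ) (V x * τ / (2 * θ / (θ - 2))) := by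
        apply intervalIntegral.integral_congr
        intro τ hτ
        rw [Set.uIcc_of_le ht.le] at hτ
        unfold glk
        rw [if_neg hx, if_pos hτ.1]
      have hlin : Continuous fun τ : ℝ => V x * τ / (2 * θ / (θ - 2)) :=
        (continuous_const.mul continuous_id).div_const _
      have hle : (∫ τ in (0:ℝ)..t, min (flk f lam k p q τ) (V x * τ / (2 * θ / (θ - 2))))
          ≤ ∫ τ in (0:ℝ)..t, V x * τ / (2 * θ / (θ - 2)) := by
        apply intervalIntegral.integral_mono_on ht.le
          (myMin_II (hflk_cont.intervalIntegrable 0 t) (hlin.intervalIntegrable 0 t))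
          (hlin.intervalIntegrable 0 t)
        intro τ _
        exact min_le_right _ _
      have heval : (∫ τ in (0:ℝ)..t, V x * τ / (2 * θ / (θ - 2)))
          = V x * t ^ 2 * ((θ - 2) / (4 * θ)) := by
        have h1 : (fun τ : ℝ => V x * τ / (2 * θ / (θ - 2)))
            = fun τ : ℝ => (V x / (2 * θ / (θ - 2))) * τ := by
          funext τ; ring
        rw [h1, intervalIntegral.integral_const_mul, integral_id]
        have hθ2' : θ - 2 ≠ 0 := by linarith
        have hθ0' : θ ≠ 0 := by linarith
        field_simp
        ring
      rw [hcongr]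
      rw [heval] at hle
      exact hle
  -- arithmetic helper
  have arith : ∀ Sv Bv Av : ℝ, 0 ≤ Sv → 0 ≤ Bv → θ * Av ≤ Bv + (θ - 2) / 4 * Sv →
      (1 / 2 * Sv - Av) - 1 / θ * (Sv - Bv) ≥ (θ - 2) / (4 * θ) * Sv := by
    intro Sv Bv Av hSv hBv hAB
    have e1 : θ * (Bv / θ + (θ - 2) / (4 * θ) * Sv) = Bv + (θ - 2) / 4 * Sv := by
      field_simp
    have h1 : Av ≤ Bv / θ + (θ - 2) / (4 * θ) * Sv :=
      le_of_mul_le_mul_left (by rw [e1]; exact hAB) hθ0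
    have hid : (1 / 2 * Sv - (Bv / θ + (θ - 2) / (4 * θ) * Sv)) - 1 / θ * (Sv - Bv)
        = (θ - 2) / (4 * θ) * Sv := by
      field_simp
      ring
    linarith [hid, h1]
  -- Part 1 : the coercivity inequality
  have key : ∀ u : EuclideanSpace ℝ (Fin N) → ℝ, memE N K V u →
      ((1 / 2) * (normE N K V u) ^ 2 - ∫ x, Glk N V f lam k p q θ R x (u x)) -
        (1 / θ) * ((normE N K V u) ^ 2 - ∫ x, glk N V f lam k p q θ R x (u x) * u x) ≥
        ((θ - 2) / (4 * θ)) * (normE N K V u) ^ 2 := by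
    rintro u ⟨hu_meas, huK, huV⟩
    have hIK0 : 0 ≤ ∫ z : EuclideanSpace ℝ (Fin N) × EuclideanSpace ℝ (Fin N),
        (u z.1 - u z.2) ^ 2 * K (z.1 - z.2) :=
      integral_nonneg fun z => mul_nonneg (sq_nonneg _) (hK_pos _).le
    have hIV0 : 0 ≤ ∫ x, V x * u x ^ 2 :=
      integral_nonneg_of_ae (hV_nonneg.mono fun x hx => mul_nonneg hx (sq_nonneg _))
    have hnorm : (normE N K V u) ^ 2
        = (∫ z : EuclideanSpace ℝ (Fin N) × EuclideanSpace ℝ (Fin N),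
            (u z.1 - u z.2) ^ 2 * K (z.1 - z.2)) + ∫ x, V x * u x ^ 2 := by
      unfold normE
      exact Real.sq_sqrt (add_nonneg hIK0 hIV0)
    have hB0 : 0 ≤ ∫ x, glk N V f lam k p q θ R x (u x) * u x :=
      integral_nonneg_of_ae (hV_nonneg.mono fun x hVx => hglk_mul_nonneg x hVx (u x))
    by_cases hGint : Integrable (fun x => Glk N V f lam k p q θ R x (u x)) volume
    · -- the integrable case : also g·u is integrable
      have hgum : Measurable (fun x => glk N V f lam k p q θ R x (u x) * u x) := by
        apply Measurable.mul _ hu_meas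
        have hrfl : (fun x => glk N V f lam k p q θ R x (u x)) = fun x =>
            if ‖x‖ ≤ R then flk f lam k p q (u x)
            else if 0 ≤ u x then min (flk f lam k p q (u x)) (V x * u x / (2 * θ / (θ - 2)))
            else 0 := rfl
        rw [hrfl]
        refine Measurable.ite ?_ (hflk_cont.measurable.comp hu_meas)
          (Measurable.ite ?_ ?_ measurable_const)
        · exact measurableSet_le continuous_norm.measurable measurable_const
        · exact measurableSet_le measurable_const hu_meas
        · exact (hflk_cont.measurable.comp hu_meas).min ((hV_meas.mul hu_meas).div_const _)
      set S : Set (EuclideanSpace ℝ (Fin N)) := {x | ‖x‖ ≤ R} with hSdef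
      have hball : MeasurableSet S := measurableSet_le continuous_norm.measurable measurable_const
      have hballfin : volume S < ⊤ := by
        have hSeq : S = Metric.closedBall (0 : EuclideanSpace ℝ (Fin N)) R := by
          ext x; simp [hSdef, Metric.mem_closedBall, dist_zero_right]
        rw [hSeq]
        exact measure_closedBall_lt_top
      have hup_int : IntegrableOn (fun x => (max (u x) 0) ^ p) S volume := by
        apply Integrable.mono' (g := fun x => (Glk N V f lam k p q θ R x (u x) + c₃) / c₂)
        · exact ((hGint.integrableOn).add (integrableOn_const hballfin.ne)).div_const c₂
        · exact ((cont_rpow_const hp0).measurable.comp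
            (hu_meas.max measurable_const)).aestronglyMeasurable
        · rw [ae_restrict_iff' hball]
          apply ae_of_all
          intro x hx
          have hx' : ‖x‖ ≤ R := hx
          rw [Real.norm_eq_abs, abs_of_nonneg (Real.rpow_nonneg (le_max_right _ _) p),
            hGlk_ball x hx']
          rcases le_or_gt (u x) 0 with h | h
          · rw [max_eq_right h, Real.zero_rpow (ne_of_gt hp0),
              Fl_zero_of_nonpos hf_zero hq1 h]
            positivity
          · rw [max_eq_left h.le, le_div_iff₀ hc₂]
            have hl := hlow (u x) h.le
            nlinarith [hl]
      have hS : IntegrableOn (fun x => glk N V f lam k p q θ R x (u x) * u x) S volume := by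
        apply Integrable.mono' (g := fun x => M + C * (max (u x) 0) ^ p)
        · exact (integrableOn_const hballfin.ne).add (hup_int.const_mul C)
        · exact hgum.aestronglyMeasurable
        · rw [ae_restrict_iff' hball]
          apply ae_of_all
          intro x hx
          have hx' : ‖x‖ ≤ R := hx
          rw [hglk_ball x hx', Real.norm_eq_abs, abs_of_nonneg (hflkmul0 (u x))]
          exact hMC (u x)
      have hSc : IntegrableOn (fun x => glk N V f lam k p q θ R x (u x) * u x) Sᶜ volume := by
        apply Integrable.mono' (g := fun x => V x * u x ^ 2 / (2 * θ / (θ - 2)))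
        · exact (huV.integrableOn).div_const _
        · exact hgum.aestronglyMeasurable
        · filter_upwards [ae_restrict_of_ae hV_nonneg, ae_restrict_mem hball.compl] with x hVx hxc
          have hx : ¬ (‖x‖ ≤ R) := hxc
          rw [Real.norm_eq_abs, abs_of_nonneg (hglk_mul_nonneg x hVx (u x))]
          exact hglk_mul_out x hx hVx (u x)
      have hHint : Integrable (fun x => glk N V f lam k p q θ R x (u x) * u x) volume := by
        have hcup := hS.union hSc
        rwa [Set.union_compl_self, ← integrableOn_univ] at *
      -- pointwise a.e. inequality and integration
      have hGm : Integrable (fun x => θ * Glk N V f lam k p q θ R x (u x)) volume :=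
        hGint.const_mul θ
      have hRm : Integrable (fun x =>
          glk N V f lam k p q θ R x (u x) * u x + (θ - 2) / 4 * (V x * u x ^ 2)) volume :=
        hHint.add (huV.const_mul _)
      have hptwise : ∀ᵐ x : EuclideanSpace ℝ (Fin N),
          θ * Glk N V f lam k p q θ R x (u x)
            ≤ glk N V f lam k p q θ R x (u x) * u x + (θ - 2) / 4 * (V x * u x ^ 2) := by
        apply hV_nonneg.mono
        intro x hVx
        by_cases hx : ‖x‖ ≤ R
        · rw [hGlk_ball x hx, hglk_ball x hx]
          have hAR' := hAR (u x)
          rw [mul_comm (u x)] at hAR'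
          have hnn : 0 ≤ (θ - 2) / 4 * (V x * u x ^ 2) := by
            apply mul_nonneg _ (mul_nonneg hVx (sq_nonneg _))
            linarith
          linarith
        · have h1 := hGlk_out x hx hVx (u x)
          have h2 := hglk_mul_nonneg x hVx (u x)
          have h4 := mul_le_mul_of_nonneg_left h1 hθ0.le
          have h3 : θ * (V x * u x ^ 2 * ((θ - 2) / (4 * θ))) = (θ - 2) / 4 * (V x * u x ^ 2) := by
            field_simp
          rw [h3] at h4
          linarith
      have hmono := integral_mono_ae hGm hRm hptwise
      rw [integral_const_mul] at hmono
      rw [integral_add hHint (huV.const_mul _), integral_const_mul] at hmono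
      have h7 : (0:ℝ) ≤ (θ - 2) / 4 := by linarith
      have h8 : (θ - 2) / 4 * (∫ x, V x * u x ^ 2)
          ≤ (θ - 2) / 4 * ((∫ z : EuclideanSpace ℝ (Fin N) × EuclideanSpace ℝ (Fin N),
            (u z.1 - u z.2) ^ 2 * K (z.1 - z.2)) + ∫ x, V x * u x ^ 2) := by
        apply mul_le_mul_of_nonneg_left _ h7
        linarith [hIK0]
      rw [hnorm]
      apply arith _ _ _ (add_nonneg hIK0 hIV0) hB0
      linarith [hmono, h8]
    · -- the non-integrable case : the Glk integral is (junk) zero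
      rw [integral_undef hGint, hnorm]
      have harith := arith _ _ 0 (add_nonneg hIK0 hIV0) hB0 (by
        rw [mul_zero]
        have : 0 ≤ (θ - 2) / 4 * ((∫ z : EuclideanSpace ℝ (Fin N) × EuclideanSpace ℝ (Fin N),
            (u z.1 - u z.2) ^ 2 * K (z.1 - z.2)) + ∫ x, V x * u x ^ 2) := by
          apply mul_nonneg _ (add_nonneg hIK0 hIV0)
          linarith
        linarith [hB0])
      linarith [harith]
  refine ⟨key, ?_⟩
  -- Part 2 : Palais–Smale sequences are bounded
  rintro u hu ⟨c, hJc⟩ ⟨ε, hε0, hεb⟩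
  obtain ⟨CJ, hCJ⟩ := hJc.bddAbove_range
  have hCJ' : ∀ n, Jlk N K V f lam k p q θ R (u n) ≤ CJ := fun n => hCJ ⟨n, rfl⟩
  obtain ⟨E, hE⟩ := hε0.bddAbove_range
  have hE' : ∀ n, ε n ≤ E := fun n => hE ⟨n, rfl⟩
  set c' := (θ - 2) / (4 * θ) with hc'def
  have hc'0 : 0 < c' := by
    rw [hc'def]; apply div_pos <;> linarith
  set CJ' := max CJ 0 with hCJ'def
  set E' := max E 0 with hE'def
  have hCJ'0 : 0 ≤ CJ' := le_max_right _ _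
  have hE'0 : 0 ≤ E' := le_max_right _ _
  refine ⟨max 1 ((CJ' + E' / θ) / c'), fun n => ?_⟩
  set T := normE N K V (u n) with hTdef
  have hT0 : 0 ≤ T := Real.sqrt_nonneg _
  obtain ⟨hun_meas, hunK, hunV⟩ := hu n
  have hIK0 : 0 ≤ ∫ z : EuclideanSpace ℝ (Fin N) × EuclideanSpace ℝ (Fin N),
      (u n z.1 - u n z.2) ^ 2 * K (z.1 - z.2) :=
    integral_nonneg fun z => mul_nonneg (sq_nonneg _) (hK_pos _).le
  have hIV0 : 0 ≤ ∫ x, V x * u n x ^ 2 :=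
    integral_nonneg_of_ae (hV_nonneg.mono fun x hx => mul_nonneg hx (sq_nonneg _))
  have hTsq : T ^ 2 = (∫ z : EuclideanSpace ℝ (Fin N) × EuclideanSpace ℝ (Fin N),
      (u n z.1 - u n z.2) ^ 2 * K (z.1 - z.2)) + ∫ x, V x * u n x ^ 2 := by
    rw [hTdef]
    unfold normE
    exact Real.sq_sqrt (add_nonneg hIK0 hIV0)
  have hinner : innerE N K V (u n) (u n) = T ^ 2 := by
    rw [hTsq]
    unfold innerE
    congr 1
    · congr 1
      funext z
      ring
    · congr 1
      funext x
      ring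
  set B := ∫ x, glk N V f lam k p q θ R x (u n x) * u n x with hBdef
  have hps := hεb n (u n) (hu n)
  rw [hinner] at hps
  have hlb : -(ε n * T) ≤ T ^ 2 - B := (abs_le.1 hps).1
  have hco := key (u n) (hu n)
  have hJeq : Jlk N K V f lam k p q θ R (u n)
      = (1 / 2) * T ^ 2 - ∫ x, Glk N V f lam k p q θ R x (u n x) := rfl
  have hchain : c' * T ^ 2 ≤ CJ' + (E' / θ) * T := by
    have h1 : c' * T ^ 2 ≤ Jlk N K V f lam k p q θ R (u n) - (1 / θ) * (T ^ 2 - B) := by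
      rw [hJeq]
      linarith [hco]
    have h2 : -(1 / θ) * (T ^ 2 - B) ≤ (1 / θ) * (ε n * T) := by
      have hpos : (0:ℝ) ≤ 1 / θ := by positivity
      nlinarith [hlb, hpos]
    have h3 : ε n * T ≤ E' * T :=
      mul_le_mul_of_nonneg_right (le_trans (hE' n) (le_max_left _ _)) hT0
    have h4 : (1 / θ) * (E' * T) = (E' / θ) * T := by ring
    have h5 : Jlk N K V f lam k p q θ R (u n) ≤ CJ' := le_trans (hCJ' n) (le_max_left _ _)
    have h6 : (1 / θ) * (ε n * T) ≤ (1 / θ) * (E' * T) := by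
      apply mul_le_mul_of_nonneg_left h3
      positivity
    linarith [h1, h2, h5, h6, h4.le, h4.ge]
  rcases le_or_gt T 1 with hT1 | hT1
  · exact le_trans hT1 (le_max_left _ _)
  · apply le_trans _ (le_max_right _ _)
    rw [le_div_iff₀ hc'0]
    have h5 : (c' * T) * T ≤ (CJ' + E' / θ) * T := by
      nlinarith [hchain, mul_nonneg hCJ'0 (by linarith : (0:ℝ) ≤ T - 1)]
    exact le_of_mul_le_mul_right (by linarith [h5]) (by linarith : (0:ℝ) < T)
end
end

section
/- If t, τ ∈ ℝ satisfy |t| > n^{1/(β−1)} and |τ| ≤ n^{1/(β−1)}, then h(t,τ) := 2(nt − τ|τ|^{β−1})² − C_β (t−τ)(n²t − τ|τ|^{2(β−1)}) ≤ 0. -/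
noncomputable section

open Real

lemma lemC (γ : ℝ) (hγ : 0 < γ) (u : ℝ) (hu : 0 ≤ u) :
    (γ + 1) * Real.sinh (γ * u) ≤ γ * Real.sinh ((γ + 1) * u) := by
  set g : ℝ → ℝ := fun v => γ * Real.sinh ((γ + 1) * v) - (γ + 1) * Real.sinh (γ * v) with hg
  have hd : ∀ v : ℝ, HasDerivAt g
      (γ * (Real.cosh ((γ + 1) * v) * (γ + 1)) - (γ + 1) * (Real.cosh (γ * v) * γ)) v := by
    intro v
    have h1 : HasDerivAt (fun v : ℝ => (γ + 1) * v) (γ + 1) v := by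
      simpa using (hasDerivAt_id v).const_mul (γ + 1)
    have h2 : HasDerivAt (fun v : ℝ => γ * v) γ v := by
      simpa using (hasDerivAt_id v).const_mul γ
    exact ((h1.sinh).const_mul γ).sub ((h2.sinh).const_mul (γ + 1))
  have mono : MonotoneOn g (Set.Ici (0 : ℝ)) := by
    apply monotoneOn_of_deriv_nonneg (convex_Ici 0)
    · exact fun v _ => (hd v).continuousAt.continuousWithinAt
    · exact fun v _ => (hd v).differentiableAt.differentiableWithinAt
    · intro v hv
      rw [interior_Ici, Set.mem_Ioi] at hv
      rw [(hd v).deriv]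
      have hc : Real.cosh (γ * v) ≤ Real.cosh ((γ + 1) * v) := by
        rw [Real.cosh_le_cosh]
        rw [abs_of_nonneg (by positivity), abs_of_nonneg (by positivity)]
        nlinarith
      nlinarith [mul_le_mul_of_nonneg_left hc (show (0:ℝ) ≤ γ*(γ+1) by positivity)]
  have h0 := mono (Set.self_mem_Ici) (Set.mem_Ici.2 hu) hu
  simp only [hg, mul_zero, Real.sinh_zero] at h0
  linarith

lemma lemB (γ : ℝ) (hγ : 0 < γ) (u : ℝ) (hu : 0 ≤ u) :
    (2 * γ + 1) * (Real.cosh (γ * u) - 1) ≤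
      γ ^ 2 * (Real.cosh ((γ + 1) * u) - Real.cosh (γ * u)) := by
  set F : ℝ → ℝ := fun v => γ ^ 2 * Real.cosh ((γ + 1) * v) - (γ + 1) ^ 2 * Real.cosh (γ * v)
    with hF
  have hd : ∀ v : ℝ, HasDerivAt F
      (γ ^ 2 * (Real.sinh ((γ + 1) * v) * (γ + 1)) - (γ + 1) ^ 2 * (Real.sinh (γ * v) * γ)) v := by
    intro v
    have h1 : HasDerivAt (fun v : ℝ => (γ + 1) * v) (γ + 1) v := by
      simpa using (hasDerivAt_id v).const_mul (γ + 1)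
    have h2 : HasDerivAt (fun v : ℝ => γ * v) γ v := by
      simpa using (hasDerivAt_id v).const_mul γ
    exact ((h1.cosh).const_mul (γ ^ 2)).sub ((h2.cosh).const_mul ((γ + 1) ^ 2))
  have mono : MonotoneOn F (Set.Ici (0 : ℝ)) := by
    apply monotoneOn_of_deriv_nonneg (convex_Ici 0)
    · exact fun v _ => (hd v).continuousAt.continuousWithinAt
    · exact fun v _ => (hd v).differentiableAt.differentiableWithinAt
    · intro v hv
      rw [interior_Ici, Set.mem_Ioi] at hv
      rw [(hd v).deriv]
      have h := lemC γ hγ v hv.le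
      nlinarith [mul_le_mul_of_nonneg_left h (show (0:ℝ) ≤ γ*(γ+1) by positivity)]
  have h0 := mono (Set.self_mem_Ici) (Set.mem_Ici.2 hu) hu
  simp only [hF, mul_zero, Real.cosh_zero, mul_one] at h0
  nlinarith [h0]

lemma lemAbs (γ A B : ℝ) (hγ : 0 < γ) (hA : 0 < A) (hB : 0 < B)
    (hkey : (2 * γ + 1) * (A + A⁻¹ - 2) ≤ γ ^ 2 * (B + B⁻¹ - A - A⁻¹)) :
    2 * (A * B⁻¹) * (1 - A⁻¹) ^ 2 ≤
      2 * γ ^ 2 / (2 * γ + 1) * (1 - A * B⁻¹) * (1 - A * B⁻¹ * (A⁻¹) ^ 2) := by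
  rw [div_mul_eq_mul_div, div_mul_eq_mul_div, le_div_iff₀ (by positivity : (0:ℝ) < 2 * γ + 1)]
  have hident : (2 * γ ^ 2 * (1 - A * B⁻¹) * (1 - A * B⁻¹ * (A⁻¹) ^ 2)
      - 2 * (A * B⁻¹) * (1 - A⁻¹) ^ 2 * (2 * γ + 1)) * B
      = 2 * (γ ^ 2 * (B + B⁻¹ - A - A⁻¹) - (2 * γ + 1) * (A + A⁻¹ - 2)) := by
    field_simp
    ring
  nlinarith [hident, hkey, hB]

lemma lemA (β : ℝ) (hβ : 1 < β) (x : ℝ) (hx0 : 0 ≤ x) (hx1 : x ≤ 1) :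
    2 * x * (1 - x ^ (β - 1)) ^ 2 ≤
      2 * (β - 1) ^ 2 / (2 * β - 1) * (1 - x) * (1 - x * (x ^ (β - 1)) ^ 2) := by
  have hγ : 0 < β - 1 := by linarith
  rcases eq_or_lt_of_le hx0 with h0 | hxpos
  · rw [← h0, Real.zero_rpow (by intro h; rw [sub_eq_zero] at h; exact absurd h.symm hβ.ne : β - 1 ≠ 0)]
    have h2 : (0:ℝ) < 2 * β - 1 := by linarith
    norm_num
    positivity
  · set γ := β - 1 with hγdef
    set u := -Real.log x with hudef
    have hu : 0 ≤ u := by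
      simp only [hudef, neg_nonneg]
      exact Real.log_nonpos hx0 hx1
    have hkey : (2 * γ + 1) * (Real.exp (γ * u) + Real.exp (-(γ * u)) - 2) ≤
        γ ^ 2 * (Real.exp ((γ + 1) * u) + Real.exp (-((γ + 1) * u))
          - Real.exp (γ * u) - Real.exp (-(γ * u))) := by
      have h := lemB γ hγ u hu
      simp only [Real.cosh_eq] at h
      ring_nf at h ⊢
      linarith
    have hxA : x = Real.exp (γ * u) * (Real.exp ((γ + 1) * u))⁻¹ := by
      rw [← Real.exp_neg, ← Real.exp_add, ← Real.exp_log hxpos]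
      congr 1
      simp [hudef]
      ring
    have hp : x ^ γ = (Real.exp (γ * u))⁻¹ := by
      rw [Real.rpow_def_of_pos hxpos, ← Real.exp_neg]
      congr 1
      simp only [hudef]
      ring
    have h2β : 2 * β - 1 = 2 * γ + 1 := by rw [hγdef]; ring
    have hβγ : β - 1 = γ := hγdef.symm
    rw [hp, hxA, h2β]
    simp only [Real.exp_neg] at hkey
    exact lemAbs γ _ _ hγ (Real.exp_pos _) (Real.exp_pos _) hkey

lemma core (β : ℝ) (hβ : 1 < β) (τ M : ℝ) (h0 : 0 ≤ τ) (hτM : τ ≤ M) (hM : 0 < M) :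
    2 * M * τ * (M ^ (β - 1) - τ ^ (β - 1)) ^ 2 ≤
      2 * (β - 1) ^ 2 / (2 * β - 1) * (M - τ) * ((M ^ (β - 1)) ^ 2 * M - τ * (τ ^ (β - 1)) ^ 2) := by
  have hx0 : 0 ≤ τ / M := by positivity
  have hx1 : τ / M ≤ 1 := (div_le_one hM).2 hτM
  have h := lemA β hβ (τ / M) hx0 hx1
  have hpx : τ ^ (β - 1) = (τ / M) ^ (β - 1) * M ^ (β - 1) := by
    rw [← Real.mul_rpow hx0 hM.le, div_mul_cancel₀ _ hM.ne']
  have hτx : τ = (τ / M) * M := (div_mul_cancel₀ τ hM.ne').symm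
  set x := τ / M with hxd
  set P := M ^ (β - 1) with hPd
  have e1 : 2 * M * (x * M) * (P - x ^ (β - 1) * P) ^ 2
      = M ^ 2 * P ^ 2 * (2 * x * (1 - x ^ (β - 1)) ^ 2) := by ring
  have e2 : 2 * (β - 1) ^ 2 / (2 * β - 1) * (M - x * M) * (P ^ 2 * M - x * M * (x ^ (β - 1) * P) ^ 2)
      = M ^ 2 * P ^ 2 * (2 * (β - 1) ^ 2 / (2 * β - 1) * (1 - x) * (1 - x * (x ^ (β - 1)) ^ 2)) := by
    ring
  rw [hpx]
  rw [show 2 * M * τ * (P - x ^ (β - 1) * P) ^ 2 = 2 * M * (x * M) * (P - x ^ (β - 1) * P) ^ 2 by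
    rw [← hτx]]
  rw [show 2 * (β - 1) ^ 2 / (2 * β - 1) * (M - τ) * (P ^ 2 * M - τ * (x ^ (β - 1) * P) ^ 2)
      = 2 * (β - 1) ^ 2 / (2 * β - 1) * (M - x * M) * (P ^ 2 * M - x * M * (x ^ (β - 1) * P) ^ 2) by
    rw [← hτx]]
  rw [e1, e2]
  exact mul_le_mul_of_nonneg_left h (by positivity)

lemma main_pos (β : ℝ) (hβ : 1 < β) (n : ℕ) (hn : 0 < n) (t τ : ℝ)
    (ht : (n : ℝ) ^ ((1 : ℝ) / (β - 1)) < t)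
    (hτ : |τ| ≤ (n : ℝ) ^ ((1 : ℝ) / (β - 1))) :
    2 * ((n : ℝ) * t - τ * |τ| ^ (β - 1)) ^ 2 -
      (2 + 2 * (β - 1) ^ 2 / (2 * β - 1)) * (t - τ) *
        ((n : ℝ) ^ 2 * t - τ * |τ| ^ (2 * (β - 1))) ≤ 0 := by
  have hγ : 0 < β - 1 := by linarith
  have hn0 : (0 : ℝ) < n := by exact_mod_cast hn
  set M := (n : ℝ) ^ ((1 : ℝ) / (β - 1)) with hMd
  have hM0 : 0 < M := Real.rpow_pos_of_pos hn0 _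
  have hMn : M ^ (β - 1) = (n : ℝ) := by
    rw [hMd, ← Real.rpow_mul hn0.le, one_div_mul_cancel (ne_of_gt hγ), Real.rpow_one]
  set p := |τ| ^ (β - 1) with hpd
  have hp0 : 0 ≤ p := Real.rpow_nonneg (abs_nonneg τ) _
  have hpn : p ≤ (n : ℝ) := by
    rw [← hMn]; exact Real.rpow_le_rpow (abs_nonneg τ) hτ hγ.le
  have hsq : |τ| ^ (2 * (β - 1)) = p ^ 2 := by
    rw [show (2 : ℝ) * (β - 1) = (β - 1) * 2 by ring, Real.rpow_mul (abs_nonneg τ),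
      show ((2 : ℝ)) = ((2 : ℕ) : ℝ) by norm_num, Real.rpow_natCast]
  rw [hsq]
  set c := 2 * (β - 1) ^ 2 / (2 * β - 1) with hcd
  have hc0 : 0 ≤ c := by
    have : (0 : ℝ) < 2 * β - 1 := by linarith
    rw [hcd]; positivity
  have ht0 : 0 < t := lt_trans hM0 ht
  have hs : 2 * t * τ * ((n : ℝ) - p) ^ 2 ≤
      c * (t - τ) * ((n : ℝ) ^ 2 * t - τ * p ^ 2) := by
    rcases le_or_gt τ 0 with hτ0 | hτ0
    · have h1 : 0 ≤ t - τ := by linarith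
      have h2 : 0 ≤ (n : ℝ) ^ 2 * t - τ * p ^ 2 := by
        have : τ * p ^ 2 ≤ 0 := mul_nonpos_of_nonpos_of_nonneg hτ0 (sq_nonneg p)
        nlinarith
      have h3 : 0 ≤ t * (-τ) * ((n : ℝ) - p) ^ 2 :=
        mul_nonneg (mul_nonneg ht0.le (neg_nonneg.2 hτ0)) (sq_nonneg _)
      nlinarith [mul_nonneg (mul_nonneg hc0 h1) h2, h3]
    · have habs : |τ| = τ := abs_of_pos hτ0
      rw [habs] at hpd hτ
      have hcore := core β hβ τ M hτ0.le hτ hM0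
      rw [hMn, ← hpd, ← hcd] at hcore
      have hτp : τ * p ≤ M * (n : ℝ) := mul_le_mul hτ hpn hp0 hM0.le
      have hA : 0 ≤ c * ((M * (n : ℝ) - τ * p) * (M * (n : ℝ) + τ * p)) := by
        apply mul_nonneg hc0
        apply mul_nonneg (by linarith)
        have := mul_nonneg hτ0.le hp0
        nlinarith
      have h2' : 2 * M * τ * ((n : ℝ) - p) ^ 2 ≤
          c * M * (2 * (n : ℝ) ^ 2 * M - (n : ℝ) ^ 2 * τ - τ * p ^ 2) := by
        linarith [hcore, hA]
      have htM : M ≤ t := ht.le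
      have key : 0 ≤ M * (c * (t - τ) * ((n : ℝ) ^ 2 * t - τ * p ^ 2)
          - 2 * t * τ * ((n : ℝ) - p) ^ 2) := by
        have q1 : 0 ≤ M * (c * (M - τ) * ((n : ℝ) ^ 2 * M - τ * p ^ 2)
            - 2 * M * τ * ((n : ℝ) - p) ^ 2) :=
          mul_nonneg hM0.le (by linarith)
        have q2 : 0 ≤ (t - M) * (c * M * (2 * (n : ℝ) ^ 2 * M - (n : ℝ) ^ 2 * τ - τ * p ^ 2)
            - 2 * M * τ * ((n : ℝ) - p) ^ 2) :=
          mul_nonneg (by linarith) (by linarith)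
        have q3 : 0 ≤ c * (n : ℝ) ^ 2 * M * (t - M) ^ 2 := by positivity
        linarith [q1, q2, q3]
      nlinarith [key, hM0]
  nlinarith [hs]

/-- `h(t,τ) ≤ 0` whenever `|t| > n^{1/(β−1)}` and `|τ| ≤ n^{1/(β−1)}`. -/
theorem statement_6 (β : ℝ) (hβ : 1 < β) (n : ℕ) (hn : 0 < n)
    (t τ : ℝ) (ht : (n : ℝ) ^ ((1 : ℝ) / (β - 1)) < |t|)
    (hτ : |τ| ≤ (n : ℝ) ^ ((1 : ℝ) / (β - 1))) :
    2 * ((n : ℝ) * t - τ * |τ| ^ (β - 1)) ^ 2 -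
      (2 + 2 * (β - 1) ^ 2 / (2 * β - 1)) * (t - τ) *
        ((n : ℝ) ^ 2 * t - τ * |τ| ^ (2 * (β - 1))) ≤ 0 := by
  rcases le_or_gt 0 t with ht0 | ht0
  · rw [abs_of_nonneg ht0] at ht
    exact main_pos β hβ n hn t τ ht hτ
  · rw [abs_of_neg ht0] at ht
    have h := main_pos β hβ n hn (-t) (-τ) ht (by rwa [abs_neg])
    rw [abs_neg] at h
    nlinarith [h]
end
end

section
/- For every τ ∈ [0, n^{1/(β−1)}] one has C_β n² + (2β−1) C_β τ^{2(β−1)} > 4βn τ^{β−1}; that is, the derivative of the function q_β(τ) := −4n τ^β + C_β n² τ + C_β τ^{2β−1} is strictly positive on [0, n^{1/(β−1)}]. -/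
noncomputable section

/-- The derivative `q_β'(τ) = −4βn τ^{β−1} + C_β n² + (2β−1) C_β τ^{2(β−1)}`
of `q_β` is strictly positive on `[0, n^{1/(β−1)}]`. -/
theorem statement_7 (β : ℝ) (hβ : 1 < β) (n : ℕ) (hn : 0 < n)
    (τ : ℝ) (hτ0 : 0 ≤ τ) (hτ : τ ≤ (n : ℝ) ^ ((1 : ℝ) / (β - 1))) :
    4 * β * (n : ℝ) * τ ^ (β - 1) <
      (2 + 2 * (β - 1) ^ 2 / (2 * β - 1)) * (n : ℝ) ^ 2 +
        (2 * β - 1) * (2 + 2 * (β - 1) ^ 2 / (2 * β - 1)) * τ ^ (2 * (β - 1)) := by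
  have hx : (0:ℝ) ≤ τ ^ (β-1) := Real.rpow_nonneg hτ0 _
  have h2 : τ ^ (2*(β-1)) = (τ ^ (β-1))^2 := by
    rw [← Real.rpow_natCast (τ ^ (β-1)) 2, ← Real.rpow_mul hτ0]
    norm_num
    ring_nf
  rw [h2]
  have hβ1 : (0:ℝ) < 2*β - 1 := by linarith
  have hC : 2 < 2 + 2*(β-1)^2/(2*β-1) := by
    have h1 : (0:ℝ) < 2*(β-1)^2 := by nlinarith
    have := div_pos h1 hβ1
    linarith
  have hkey : (2*β-1) * (2 + 2*(β-1)^2/(2*β-1)) = 2*β^2 := by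
    field_simp; ring
  rw [hkey]
  have hn' : (0:ℝ) < n := by exact_mod_cast hn
  nlinarith [sq_nonneg (β * τ^(β-1) - n), mul_lt_mul_of_pos_right hC (by positivity : (0:ℝ) < (n:ℝ)^2)]
end
end

section
/- For all real numbers x and y, 2(x|x|^{β−1} − y|y|^{β−1})² ≤ C_β (x−y)(x|x|^{2(β−1)} − y|y|^{2(β−1)}). -/
noncomputable section

open MeasureTheory intervalIntegral

/-- Cauchy–Schwarz for interval integrals of a nonnegative continuous function. -/
lemma cs_interval {f : ℝ → ℝ} (hf : Continuous f) (hnn : ∀ s, 0 ≤ f s) {a b : ℝ}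
    (hab : a ≤ b) :
    (∫ s in a..b, f s) ^ 2 ≤ (b - a) * ∫ s in a..b, (f s) ^ 2 := by
  set μ := volume.restrict (Set.Ioc a b) with hμ
  have hfin : IsFiniteMeasure μ := by
    constructor
    rw [hμ, Measure.restrict_apply_univ]
    exact measure_Ioc_lt_top
  obtain ⟨M, hM⟩ : ∃ M : ℝ, ∀ s ∈ Set.Icc a b, ‖f s‖ ≤ M := by
    obtain ⟨M, hM⟩ := (isCompact_Icc (a := a) (b := b)).exists_bound_of_continuousOn
      (hf.norm.continuousOn)
    exact ⟨M, fun s hs => by simpa using hM s hs⟩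
  have hmeas : AEStronglyMeasurable f μ := hf.aestronglyMeasurable
  have hmem : MemLp f (ENNReal.ofReal 2) μ := by
    refine MemLp.of_bound hmeas M ?_
    rw [hμ]
    filter_upwards [ae_restrict_mem measurableSet_Ioc] with s hs
    exact hM s ⟨le_of_lt hs.1, hs.2⟩
  have hone : MemLp (fun _ : ℝ => (1:ℝ)) (ENNReal.ofReal 2) μ :=
    MemLp.of_bound aestronglyMeasurable_const 1 (Filter.Eventually.of_forall (by simp))
  have hpq : Real.HolderConjugate 2 2 := by
    constructor <;> norm_num
  have key := integral_mul_le_Lp_mul_Lq_of_nonneg hpq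
    (Filter.Eventually.of_forall hnn)
    (Filter.Eventually.of_forall (fun _ => zero_le_one)) hmem hone
  have h1 : ∫ s, f s * 1 ∂μ = ∫ s in a..b, f s := by
    rw [intervalIntegral.integral_of_le hab]; simp [hμ]
  have h2 : ∫ s, f s ^ (2:ℝ) ∂μ = ∫ s in a..b, (f s) ^ 2 := by
    rw [intervalIntegral.integral_of_le hab, hμ]
    refine integral_congr_ae (Filter.Eventually.of_forall fun s => ?_)
    show f s ^ (2:ℝ) = f s ^ (2:ℕ)
    rw [show (2:ℝ) = ((2:ℕ):ℝ) by norm_num, Real.rpow_natCast]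
  have h3 : ∫ _ : ℝ, (1:ℝ) ^ (2:ℝ) ∂μ = b - a := by
    simp [hμ, hab, Real.volume_Ioc, ENNReal.toReal_ofReal (by linarith : (0:ℝ) ≤ b - a)]
  rw [h1, h2, h3] at key
  have hI2 : 0 ≤ ∫ s in a..b, (f s) ^ 2 :=
    intervalIntegral.integral_nonneg hab (fun s _ => sq_nonneg _)
  have hI1 : 0 ≤ ∫ s in a..b, f s :=
    intervalIntegral.integral_nonneg hab (fun s _ => hnn s)
  have hba : (0:ℝ) ≤ b - a := by linarith
  calc (∫ s in a..b, f s) ^ 2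
      ≤ ((∫ s in a..b, (f s) ^ 2) ^ (1/2:ℝ) * (b - a) ^ (1/2:ℝ)) ^ 2 := by
        apply pow_le_pow_left₀ hI1 key
    _ = (b - a) * ∫ s in a..b, (f s) ^ 2 := by
        rw [mul_pow, ← Real.rpow_natCast ((∫ s in a..b, (f s)^2) ^ (1/2:ℝ)) 2,
          ← Real.rpow_natCast ((b - a) ^ (1/2:ℝ)) 2,
          ← Real.rpow_mul hI2, ← Real.rpow_mul hba]
        norm_num
        ring

lemma int_abs_rpow_nonneg {p : ℝ} (hp : 0 < p) {t : ℝ} (ht : 0 ≤ t) :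
    ∫ s in (0:ℝ)..t, |s| ^ p = t * |t| ^ p / (p + 1) := by
  have hEq : Set.EqOn (fun s : ℝ => |s| ^ p) (fun s : ℝ => s ^ p) (Set.uIcc 0 t) := by
    intro s hs
    rw [Set.uIcc_of_le ht] at hs
    simp [abs_of_nonneg hs.1]
  rw [intervalIntegral.integral_congr hEq, integral_rpow (Or.inl (by linarith)),
    Real.zero_rpow (by linarith), abs_of_nonneg ht]
  rcases eq_or_lt_of_le ht with h | h
  · simp [← h, Real.zero_rpow (by linarith : p + 1 ≠ 0)]
  · rw [Real.rpow_add_one (ne_of_gt h)]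
    ring

lemma int_abs_rpow {p : ℝ} (hp : 0 < p) (t : ℝ) :
    ∫ s in (0:ℝ)..t, |s| ^ p = t * |t| ^ p / (p + 1) := by
  rcases le_or_gt 0 t with ht | ht
  · exact int_abs_rpow_nonneg hp ht
  · have h1 : (∫ s in (0:ℝ)..t, |s| ^ p) = ∫ s in (0:ℝ)..t, |(-s)| ^ p := by
      simp
    rw [h1, intervalIntegral.integral_comp_neg (fun s => |s| ^ p), neg_zero,
      intervalIntegral.integral_symm 0 (-t),
      int_abs_rpow_nonneg hp (by linarith : (0:ℝ) ≤ -t), abs_neg]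
    ring

lemma int_abs_rpow_gen {p : ℝ} (hp : 0 < p) (x y : ℝ) :
    ∫ s in y..x, |s| ^ p = (x * |x| ^ p - y * |y| ^ p) / (p + 1) := by
  have hcont : Continuous fun s : ℝ => |s| ^ p :=
    continuous_abs.rpow_const (fun s => Or.inr (le_of_lt hp))
  have hi1 : IntervalIntegrable (fun s : ℝ => |s| ^ p) volume y 0 :=
    hcont.intervalIntegrable y 0
  have hi2 : IntervalIntegrable (fun s : ℝ => |s| ^ p) volume 0 x :=
    hcont.intervalIntegrable 0 x
  have hadd := intervalIntegral.integral_add_adjacent_intervals hi1 hi2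
  rw [← hadd, intervalIntegral.integral_symm, int_abs_rpow hp, int_abs_rpow hp]
  ring

/-- For all real `x, y`:
`2(x|x|^{β−1} − y|y|^{β−1})² ≤ C_β (x−y)(x|x|^{2(β−1)} − y|y|^{2(β−1)})`. -/
theorem statement_9 (β : ℝ) (hβ : 1 < β) (x y : ℝ) :
    2 * (x * |x| ^ (β - 1) - y * |y| ^ (β - 1)) ^ 2 ≤
      (2 + 2 * (β - 1) ^ 2 / (2 * β - 1)) * (x - y) *
        (x * |x| ^ (2 * (β - 1)) - y * |y| ^ (2 * (β - 1))) := by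
  set p := β - 1 with hpdef
  have hp : 0 < p := by simp [hpdef]; linarith
  have hcont : Continuous fun s : ℝ => |s| ^ p :=
    continuous_abs.rpow_const (fun s => Or.inr (le_of_lt hp))
  have hnn : ∀ s : ℝ, 0 ≤ |s| ^ p := fun s => Real.rpow_nonneg (abs_nonneg s) p
  have hsq : ∀ s : ℝ, (|s| ^ p) ^ 2 = |s| ^ (2 * p) := fun s => by
    rw [← Real.rpow_natCast (|s| ^ p) 2, ← Real.rpow_mul (abs_nonneg s)]
    norm_num
    rw [mul_comm]
  set I1 := ∫ s in y..x, |s| ^ p with hI1def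
  set I2 := ∫ s in y..x, |s| ^ (2 * p) with hI2def
  have claim : I1 ^ 2 ≤ (x - y) * I2 := by
    rcases le_or_gt y x with hxy | hxy
    · have := cs_interval hcont hnn hxy
      calc I1 ^ 2 ≤ (x - y) * ∫ s in y..x, (|s| ^ p) ^ 2 := this
        _ = (x - y) * I2 := by
            rw [hI2def]
            congr 1
            exact intervalIntegral.integral_congr (fun s _ => hsq s)
    · have h := cs_interval hcont hnn (le_of_lt hxy)
      have e1 : I1 = -∫ s in x..y, |s| ^ p := by
        rw [hI1def, intervalIntegral.integral_symm]
      have e2 : I2 = -∫ s in x..y, |s| ^ (2 * p) := by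
        rw [hI2def, intervalIntegral.integral_symm]
      have e3 : (∫ s in x..y, (|s| ^ p) ^ 2) = ∫ s in x..y, |s| ^ (2 * p) :=
        intervalIntegral.integral_congr (fun s _ => hsq s)
      rw [e3] at h
      rw [e1, e2]
      nlinarith [h]
  have hphi : x * |x| ^ p - y * |y| ^ p = (p + 1) * I1 := by
    rw [hI1def, int_abs_rpow_gen hp]
    field_simp
  have hpsi : x * |x| ^ (2 * p) - y * |y| ^ (2 * p) = (2 * p + 1) * I2 := by
    rw [hI2def, int_abs_rpow_gen (by linarith) ]
    field_simp
  have hβ2 : x * |x| ^ (2 * (β - 1)) - y * |y| ^ (2 * (β - 1))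
      = (2 * p + 1) * I2 := by rw [← hpdef]; exact hpsi
  rw [hβ2, hphi]
  have hC : (2 + 2 * p ^ 2 / (2 * β - 1)) * (2 * p + 1) = 2 * (p + 1) ^ 2 := by
    have h2β : 2 * β - 1 ≠ 0 := by linarith
    rw [hpdef]
    field_simp
    ring
  have goal2 : 2 * ((p + 1) * I1) ^ 2 ≤ 2 * (p + 1) ^ 2 * ((x - y) * I2) := by
    have := mul_le_mul_of_nonneg_left claim
      (by positivity : (0:ℝ) ≤ 2 * (p + 1) ^ 2)
    nlinarith [this]
  calc 2 * ((p + 1) * I1) ^ 2 ≤ 2 * (p + 1) ^ 2 * ((x - y) * I2) := goal2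
    _ = (2 + 2 * p ^ 2 / (2 * β - 1)) * (x - y) * ((2 * p + 1) * I2) := by
        rw [← hC]; ring
end
end
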